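/- Let n ≥ 2 and let i satisfy 0 < i < i+1 ≤ ⌊n/2⌋, and let m satisfy C(n,i) ≤ m ≤ C(n,i+1). With α_i* and α_{i+1}* as defined by the standard interpolation formulas, set a_i = ⌊α_i*⌋ and a_{i+1} = ⌈α_{i+1}*⌉. Then a_i + a_{i+1} = m and a_i/C(n,i) + a_{i+1}/C(n,i+1) ≤ 1. -/

import Mathlib

/-- Rounding the continuous optimizers: with `a_i = ⌊α_i*⌋` and `a_{i+1} = ⌈α_{i+1}*⌉`,
we have `a_i + a_{i+1} = m` and the LYM constraint `a_i/C(n,i) + a_{i+1}/C(n,i+1) ≤ 1`. -/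
theorem rounded_optimizer_properties (n i m : ℕ) (hn : 2 ≤ n) (hi : 0 < i)
    (hi2 : i + 1 ≤ n / 2) (hm1 : n.choose i ≤ m) (hm2 : m ≤ n.choose (i + 1)) :
    let αi : ℝ := ((n.choose (i + 1) : ℝ) - m) / ((n.choose (i + 1) : ℝ) - n.choose i)
      * n.choose i
    let αi1 : ℝ := ((m : ℝ) - n.choose i) / ((n.choose (i + 1) : ℝ) - n.choose i)
      * n.choose (i + 1)
    (⌊αi⌋ + ⌈αi1⌉ = (m : ℤ)) ∧
      ((⌊αi⌋ : ℝ) / n.choose i + (⌈αi1⌉ : ℝ) / n.choose (i + 1) ≤ 1) := by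
  intro αi αi1
  have hin : i ≤ n := by omega
  have hlt : i + 1 < n - i := by omega
  have hCpos : 0 < n.choose i := Nat.choose_pos hin
  have hC : n.choose i < n.choose (i + 1) := by
    have h1 : n.choose (i + 1) * (i + 1) = n.choose i * (n - i) :=
      Nat.choose_succ_right_eq n i
    have h3 : n.choose i * (i + 1) < n.choose (i + 1) * (i + 1) := by nlinarith
    exact Nat.lt_of_mul_lt_mul_right h3
  have hC0 : (0 : ℝ) < n.choose i := by exact_mod_cast hCpos
  have hC1 : (0 : ℝ) < n.choose (i + 1) := lt_trans hC0 (by exact_mod_cast hC)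
  have hCr : (n.choose i : ℝ) < n.choose (i + 1) := by exact_mod_cast hC
  have hd : (0 : ℝ) < (n.choose (i + 1) : ℝ) - n.choose i := by linarith
  have hsum : αi1 = (m : ℝ) - αi := by
    unfold αi αi1
    field_simp
    ring
  have hceil : ⌈αi1⌉ = (m : ℤ) - ⌊αi⌋ := by
    rw [hsum, show (m : ℝ) - αi = -(αi - ((m : ℤ) : ℝ)) by push_cast; ring,
      Int.ceil_neg, Int.floor_sub_intCast]
    ring
  constructor
  · omega
  · have hkey : αi * n.choose (i + 1) + ((m : ℝ) - αi) * n.choose i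
        = n.choose i * n.choose (i + 1) := by
      unfold αi
      field_simp
      ring
    have hfl : (⌊αi⌋ : ℝ) ≤ αi := Int.floor_le αi
    have : (⌊αi⌋ : ℝ) / n.choose i + ((m : ℝ) - ⌊αi⌋) / n.choose (i + 1) ≤ 1 := by
      rw [div_add_div _ _ (ne_of_gt hC0) (ne_of_gt hC1), div_le_one (by positivity)]
      nlinarith [mul_nonneg (sub_nonneg.2 hfl) (sub_nonneg.2 hCr.le)]
    calc (⌊αi⌋ : ℝ) / n.choose i + (⌈αi1⌉ : ℝ) / n.choose (i + 1)
        = (⌊αi⌋ : ℝ) / n.choose i + ((m : ℝ) - ⌊αi⌋) / n.choose (i + 1) := by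
          rw [hceil]; push_cast; ring
      _ ≤ 1 := this
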